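/- Let ε ∈ (0, 0.1), r ∈ (0, 0.1), and ρ ∈ (0, 0.1·ε]. Let f : ℝ → ℝ be either f(z) = exp(z) or f(z) = cosh(z). Let A, B ∈ ℝ^{n×n} be symmetric positive semidefinite matrices such that ‖A‖_∞ ≤ r (every entry of A has absolute value at most r) and (1-ρ) A ⪯ B ⪯ (1+ρ) A in the Loewner order. Then ‖D(A)^{-1} f(A) - D(B)^{-1} f(B)‖_∞ ≤ 4 · (1 + ε + 2r) · r, where D(M) := diag(f(M)·1_n) and ‖M‖_∞ is the maximum absolute value of the entries of M. -/

import Mathlib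

open Matrix

/-- The diagonal normalization matrix `D(M) = diag(f(M) 1_n)`. -/
noncomputable def attnDiag {n : ℕ} (f : ℝ → ℝ) (M : Matrix (Fin n) (Fin n) ℝ) :
    Matrix (Fin n) (Fin n) ℝ :=
  Matrix.diagonal (fun i => ∑ j, f (M i j))

/-- The `ℓ∞`-norm of a matrix: the maximum absolute value of its entries. -/
noncomputable def entryInfNorm {n : ℕ} (M : Matrix (Fin n) (Fin n) ℝ) : ℝ :=
  ⨆ i, ⨆ j, |M i j|

lemma psd_diag_nonneg {n : ℕ} {M : Matrix (Fin n) (Fin n) ℝ} (hM : M.PosSemidef)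
    (k : Fin n) : 0 ≤ M k k := by
  have := hM.dotProduct_mulVec_nonneg (Pi.single k 1)
  simpa [dotProduct_single] using this

lemma psd_abs_entry_le {n : ℕ} {M : Matrix (Fin n) (Fin n) ℝ} (hM : M.PosSemidef)
    (i j : Fin n) : |M i j| ≤ (M i i + M j j) / 2 := by
  have hsym : M j i = M i j := hM.1.apply i j
  have hd := psd_diag_nonneg hM
  rcases eq_or_ne i j with rfl | hij
  · rw [abs_of_nonneg (hd i)]; linarith [hd i]
  · have h1 := hM.dotProduct_mulVec_nonneg (Pi.single i 1 + Pi.single j 1)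
    have h2 := hM.dotProduct_mulVec_nonneg (Pi.single i 1 - Pi.single j 1)
    have e1 : (Pi.single i 1 + Pi.single j 1 : Fin n → ℝ) ⬝ᵥ
        (M *ᵥ (Pi.single i 1 + Pi.single j 1)) = M i i + M i j + (M j i + M j j) := by
      simp [mulVec_add, dotProduct_add, add_dotProduct, single_dotProduct,
        Pi.single_apply, hij, hij.symm, hsym]
    have e2 : (Pi.single i 1 - Pi.single j 1 : Fin n → ℝ) ⬝ᵥ
        (M *ᵥ (Pi.single i 1 - Pi.single j 1)) = M i i - M i j - (M j i - M j j) := by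
      simp [mulVec_sub, dotProduct_sub, sub_dotProduct, single_dotProduct,
        Pi.single_apply, hij, hij.symm, hsym]
    simp only [star_trivial] at h1 h2
    rw [e1] at h1; rw [e2] at h2
    rw [abs_le]; constructor <;> nlinarith [hsym]

lemma diag_inv_mul_apply {n : ℕ} (d : Fin n → ℝ) (hd : ∀ i, d i ≠ 0)
    (M : Matrix (Fin n) (Fin n) ℝ) (i j : Fin n) :
    ((Matrix.diagonal d)⁻¹ * M) i j = (d i)⁻¹ * M i j := by
  have h : (Matrix.diagonal d)⁻¹ = Matrix.diagonal (fun i => (d i)⁻¹) := by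
    apply Matrix.inv_eq_left_inv
    rw [diagonal_mul_diagonal]
    simp [inv_mul_cancel₀ (hd _)]
  rw [h, diagonal_mul]

lemma f_bound {f : ℝ → ℝ} (hf : f = Real.exp ∨ f = Real.cosh) {s x : ℝ}
    (hs : 0 ≤ s) (hx : |x| ≤ s) :
    Real.exp (-s) ≤ f x ∧ f x ≤ Real.exp s := by
  obtain ⟨hx1, hx2⟩ := abs_le.mp hx
  rcases hf with rfl | rfl
  · exact ⟨Real.exp_le_exp.mpr hx1, Real.exp_le_exp.mpr hx2⟩
  · constructor
    · calc Real.exp (-s) ≤ 1 := Real.exp_le_one_iff.mpr (by linarith)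
        _ ≤ Real.cosh x := Real.one_le_cosh x
    · rw [Real.cosh_eq]
      have h1 : Real.exp x ≤ Real.exp s := Real.exp_le_exp.mpr hx2
      have h2 : Real.exp (-x) ≤ Real.exp s := Real.exp_le_exp.mpr (by linarith)
      linarith

lemma exp_diff_bound {s : ℝ} (hs : 0 ≤ s) (hs1 : s ≤ 0.11) :
    Real.exp (2*s) - Real.exp (-(2*s)) ≤ 4*s + (32/9)*s^3 := by
  have h1 : |2*s| ≤ 1 := by rw [abs_of_nonneg (by linarith)]; linarith
  have h2 : |(-(2*s))| ≤ 1 := by rwa [abs_neg]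
  have habs : |2*s| = 2*s := abs_of_nonneg (by linarith)
  have e1 := Real.exp_bound h1 (n := 3) (by norm_num)
  have e2 := Real.exp_bound h2 (n := 3) (by norm_num)
  rw [abs_neg] at e2
  rw [habs, abs_le] at e1 e2
  simp only [Finset.sum_range_succ, Finset.sum_range_zero] at e1 e2
  norm_num [Nat.factorial] at e1 e2
  nlinarith [e1.1, e1.2, e2.1, e2.2]

set_option maxHeartbeats 1000000 in
theorem private_attention_accuracy {n : ℕ} (ε r ρ : ℝ)
    (hε : ε ∈ Set.Ioo (0 : ℝ) 0.1) (hr : r ∈ Set.Ioo (0 : ℝ) 0.1)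
    (hρ : ρ ∈ Set.Ioc (0 : ℝ) (0.1 * ε))
    (f : ℝ → ℝ) (hf : f = Real.exp ∨ f = Real.cosh)
    (A B : Matrix (Fin n) (Fin n) ℝ)
    (hA : A.PosSemidef) (hB : B.PosSemidef)
    (hAr : entryInfNorm A ≤ r)
    (hlow : (B - (1 - ρ) • A).PosSemidef)
    (hupp : ((1 + ρ) • A - B).PosSemidef) :
    entryInfNorm ((attnDiag f A)⁻¹ * A.map f - (attnDiag f B)⁻¹ * B.map f) ≤
      4 * (1 + ε + 2 * r) * r := by
  obtain ⟨hε0, hε1⟩ := hε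
  obtain ⟨hr0, hr1⟩ := hr
  obtain ⟨hρ0, hρ1⟩ := hρ
  have hρ01 : ρ ≤ 0.01 := by nlinarith
  set s : ℝ := r * (1 + ρ) with hs_def
  have hs0 : 0 ≤ s := by nlinarith
  have hs1 : s ≤ 0.11 := by nlinarith
  have hRHS0 : 0 ≤ 4 * (1 + ε + 2 * r) * r := by nlinarith
  -- entrywise bounds on A
  have hAij : ∀ i j, |A i j| ≤ r := by
    intro i j
    calc |A i j| ≤ ⨆ j', |A i j'| :=
          le_ciSup (f := fun j' => |A i j'|) (Set.Finite.bddAbove (Set.finite_range _)) j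
      _ ≤ entryInfNorm A :=
          le_ciSup (f := fun i' => ⨆ j', |A i' j'|)
            (Set.Finite.bddAbove (Set.finite_range _)) i
      _ ≤ r := hAr
  -- entrywise bounds on B
  have hBij : ∀ i j, |B i j| ≤ s := by
    intro i j
    have hC := psd_abs_entry_le hlow i j
    have hdiag : ∀ k, (B - (1 - ρ) • A) k k ≤ 2 * ρ * r := by
      intro k
      have h1 := psd_diag_nonneg hupp k
      have h2 := le_of_abs_le (hAij k k)
      have h3 := abs_nonneg (A k k)
      have h4 := hAij k k
      simp only [Matrix.sub_apply, Matrix.smul_apply, smul_eq_mul] at h1 ⊢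
      have hAkk : A k k ≤ r := h2
      have hAkk0 : 0 ≤ A k k := psd_diag_nonneg hA k
      nlinarith
    have hC2 : |(B - (1 - ρ) • A) i j| ≤ 2 * ρ * r :=
      hC.trans (by linarith [hdiag i, hdiag j])
    have hBexp : B i j = (B - (1 - ρ) • A) i j + (1 - ρ) * A i j := by
      simp [Matrix.sub_apply, Matrix.smul_apply, smul_eq_mul]
    rw [hBexp]
    calc |(B - (1 - ρ) • A) i j + (1 - ρ) * A i j|
        ≤ |(B - (1 - ρ) • A) i j| + |(1 - ρ) * A i j| := abs_add_le _ _
      _ ≤ 2 * ρ * r + (1 - ρ) * r := by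
          have : |(1 - ρ) * A i j| = (1 - ρ) * |A i j| := by
            rw [abs_mul, abs_of_nonneg (by linarith)]
          rw [this]
          have := hAij i j
          nlinarith
      _ ≤ s := by rw [hs_def]; ring_nf; nlinarith
  have hAijs : ∀ i j, |A i j| ≤ s := fun i j => (hAij i j).trans (by nlinarith)
  -- setup
  set E : ℝ := Real.exp s with hE_def
  have hE1 : 1 ≤ E := Real.one_le_exp hs0
  have hE0 : 0 < E := by linarith
  have hfb : ∀ x : ℝ, |x| ≤ s → E⁻¹ ≤ f x ∧ f x ≤ E := by
    intro x hx
    have := f_bound hf hs0 hx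
    rwa [Real.exp_neg, ← hE_def] at this
  -- per-entry bound
  apply Real.iSup_le _ hRHS0
  intro i
  apply Real.iSup_le _ hRHS0
  intro j
  have hn1 : (1:ℝ) ≤ (n:ℝ) := by
    have := i.pos
    exact_mod_cast Nat.one_le_cast.mpr this
  have hn0 : (0:ℝ) < (n:ℝ) := by linarith
  -- sum bounds
  have hsum : ∀ M : Matrix (Fin n) (Fin n) ℝ, (∀ k l, |M k l| ≤ s) →
      ((n:ℝ) * E⁻¹ ≤ ∑ l, f (M i l)) ∧ (∑ l, f (M i l)) ≤ (n:ℝ) * E := by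
    intro M hM
    constructor
    · have := Finset.card_nsmul_le_sum Finset.univ (fun l => f (M i l)) (E⁻¹)
        (fun l _ => (hfb _ (hM i l)).1)
      simpa [nsmul_eq_mul, Finset.card_univ] using this
    · have := Finset.sum_le_card_nsmul Finset.univ (fun l => f (M i l)) E
        (fun l _ => (hfb _ (hM i l)).2)
      simpa [nsmul_eq_mul, Finset.card_univ] using this
  obtain ⟨hSA1, hSA2⟩ := hsum A hAijs
  obtain ⟨hSB1, hSB2⟩ := hsum B hBij
  have hEn : (0:ℝ) < (n:ℝ) * E⁻¹ := by positivity
  have hSA0 : 0 < ∑ l, f (A i l) := lt_of_lt_of_le hEn hSA1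
  have hSB0 : 0 < ∑ l, f (B i l) := lt_of_lt_of_le hEn hSB1
  -- entry formula
  have hdA : ∀ k, (fun k => ∑ l, f (A k l)) k ≠ 0 := by
    intro k
    have : 0 < ∑ l, f (A k l) :=
      Finset.sum_pos (fun l _ => lt_of_lt_of_le (by positivity) (hfb _ (hAijs k l)).1)
        ⟨k, Finset.mem_univ k⟩
    exact ne_of_gt this
  have hdB : ∀ k, (fun k => ∑ l, f (B k l)) k ≠ 0 := by
    intro k
    have : 0 < ∑ l, f (B k l) :=
      Finset.sum_pos (fun l _ => lt_of_lt_of_le (by positivity) (hfb _ (hBij k l)).1)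
        ⟨k, Finset.mem_univ k⟩
    exact ne_of_gt this
  have hentry : ((attnDiag f A)⁻¹ * A.map f - (attnDiag f B)⁻¹ * B.map f) i j =
      (∑ l, f (A i l))⁻¹ * f (A i j) - (∑ l, f (B i l))⁻¹ * f (B i j) := by
    rw [Matrix.sub_apply, attnDiag, attnDiag, diag_inv_mul_apply _ hdA,
      diag_inv_mul_apply _ hdB, Matrix.map_apply, Matrix.map_apply]
  rw [hentry]
  -- bounds on each entry
  have hbound : ∀ (S : ℝ) (x : ℝ), (n:ℝ) * E⁻¹ ≤ S → S ≤ (n:ℝ) * E → E⁻¹ ≤ f x →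
      f x ≤ E → E⁻¹ / ((n:ℝ) * E) ≤ S⁻¹ * f x ∧ S⁻¹ * f x ≤ E / ((n:ℝ) * E⁻¹) := by
    intro S x h1 h2 h3 h4
    have hS0 : 0 < S := lt_of_lt_of_le hEn h1
    have hfx0 : 0 ≤ f x := le_trans (le_of_lt (by positivity)) h3
    constructor
    · have ha : ((n:ℝ) * E)⁻¹ ≤ S⁻¹ := inv_anti₀ hS0 h2
      calc E⁻¹ / ((n:ℝ) * E) = ((n:ℝ) * E)⁻¹ * E⁻¹ := by ring
        _ ≤ S⁻¹ * f x :=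
            mul_le_mul ha h3 (by positivity) (le_of_lt (inv_pos.mpr hS0))
    · have hb : S⁻¹ ≤ ((n:ℝ) * E⁻¹)⁻¹ := inv_anti₀ hEn h1
      calc S⁻¹ * f x ≤ ((n:ℝ) * E⁻¹)⁻¹ * E := mul_le_mul hb h4 hfx0 (by positivity)
        _ = E / ((n:ℝ) * E⁻¹) := by ring
  obtain ⟨hLA, hUA⟩ := hbound _ _ hSA1 hSA2 (hfb _ (hAijs i j)).1 (hfb _ (hAijs i j)).2
  obtain ⟨hLB, hUB⟩ := hbound _ _ hSB1 hSB2 (hfb _ (hBij i j)).1 (hfb _ (hBij i j)).2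
  -- the difference of the two windows
  have hUL : E / ((n:ℝ) * E⁻¹) - E⁻¹ / ((n:ℝ) * E) ≤ E^2 - (E^2)⁻¹ := by
    have h1 : E / ((n:ℝ) * E⁻¹) = E^2 / (n:ℝ) := by
      field_simp
    have h2 : E⁻¹ / ((n:ℝ) * E) = (E^2)⁻¹ / (n:ℝ) := by
      field_simp
    rw [h1, h2, div_sub_div_same, div_le_iff₀ hn0]
    have hE2 : 1 ≤ E^2 := by nlinarith
    have hEE : (E^2)⁻¹ ≤ 1 := inv_le_one_of_one_le₀ hE2
    have hD : 0 ≤ E^2 - (E^2)⁻¹ := by linarith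
    calc E^2 - (E^2)⁻¹ = (E^2 - (E^2)⁻¹) * 1 := (mul_one _).symm
      _ ≤ (E^2 - (E^2)⁻¹) * (n:ℝ) := mul_le_mul_of_nonneg_left hn1 hD
  have h2s : Real.exp (2*s) = E^2 := by
    rw [two_mul, Real.exp_add, hE_def, sq]
  have hexp2 : E^2 - (E^2)⁻¹ = Real.exp (2*s) - Real.exp (-(2*s)) := by
    rw [Real.exp_neg, h2s]
  have hpoly : 4*s + (32/9)*s^3 ≤ 4 * (1 + ε + 2 * r) * r := by
    have key1 : 4*s ≤ 4*r + 0.4*(ε*r) := by rw [hs_def]; nlinarith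
    have hρ2 : ρ^2 ≤ 0.01 * ρ := by nlinarith
    have hρ3 : ρ^3 ≤ 0.01 * ρ^2 := by nlinarith
    have h3 : (1+ρ)^3 ≤ 1.04 := by nlinarith
    have key2 : s^3 ≤ r^3 * 1.04 := by
      calc s^3 = r^3 * (1+ρ)^3 := by rw [hs_def]; ring
        _ ≤ r^3 * 1.04 := by nlinarith [pow_pos hr0 3]
    have hr3 : r^3 ≤ 0.1 * r^2 := by nlinarith [sq_nonneg r]
    have hεr : 0 ≤ ε * r := le_of_lt (mul_pos hε0 hr0)
    nlinarith [sq_nonneg r]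
  have hfinal : E^2 - (E^2)⁻¹ ≤ 4 * (1 + ε + 2 * r) * r := by
    rw [hexp2]
    exact le_trans (exp_diff_bound hs0 hs1) hpoly
  rw [abs_le]
  constructor
  · linarith [hUA, hLB, hUL, hfinal]
  · linarith [hUB, hLA, hUL, hfinal]
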